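/- Fix α > 0. The kernel K_α is infinitely differentiable on (0,∞)×(0,∞) and satisfies ∂_t K_α(x,t) = x^{2(α-1)/α} ∂_{xx} K_α(x,t) for all x, t > 0. -/

import Mathlib

open MeasureTheory Filter Set

/-- The kernel `K_α(x,t) = (α^α/(2^α Γ(α/2))) x t^{-(α/2+1)} exp(-α² x^{2/α}/(4t))`. -/
noncomputable def Kker (α x t : ℝ) : ℝ :=
  (α ^ α / (2 ^ α * Real.Gamma (α / 2))) * x * t ^ (-(α / 2 + 1)) *
    Real.exp (-(α ^ 2) * x ^ (2 / α) / (4 * t))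

/-- first x-derivative -/
lemma Kker_hasDerivAt_x (α t : ℝ) (hα : 0 < α) (ht : 0 < t) (x : ℝ) (hx : 0 < x) :
    HasDerivAt (fun y => Kker α y t)
      ((α ^ α / (2 ^ α * Real.Gamma (α / 2))) * t ^ (-(α / 2 + 1)) *
        Real.exp (-(α ^ 2) * x ^ (2 / α) / (4 * t)) * (1 - α / (2 * t) * x ^ (2 / α))) x := by
  have hfun : (fun y => Kker α y t) =
      fun y => (α ^ α / (2 ^ α * Real.Gamma (α / 2)) * t ^ (-(α / 2 + 1))) *
        (y * Real.exp (-(α ^ 2) * y ^ (2 / α) / (4 * t))) := by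
    funext y; unfold Kker; ring
  have hu : HasDerivAt (fun y : ℝ => -(α ^ 2) * y ^ (2 / α) / (4 * t))
      (-(α ^ 2) * ((2 / α) * x ^ (2 / α - 1)) / (4 * t)) x :=
    ((Real.hasDerivAt_rpow_const (Or.inl hx.ne')).const_mul _).div_const _
  have hE := hu.exp
  have h := ((hasDerivAt_id x).mul hE).const_mul
      (α ^ α / (2 ^ α * Real.Gamma (α / 2)) * t ^ (-(α / 2 + 1)))
  rw [hfun]
  refine h.congr_deriv ?_
  have hxx : x * x ^ (2 / α - 1) = x ^ (2 / α) := by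
    rw [Real.rpow_sub hx, Real.rpow_one]; field_simp
  simp only [id_eq, one_mul]
  rw [show x * (Real.exp (-α ^ 2 * x ^ (2 / α) / (4 * t)) *
      (-α ^ 2 * (2 / α * x ^ (2 / α - 1)) / (4 * t))) =
    Real.exp (-α ^ 2 * x ^ (2 / α) / (4 * t)) *
      (-α ^ 2 * (2 / α * (x * x ^ (2 / α - 1))) / (4 * t)) by ring, hxx]
  field_simp
  ring

/-- second x-derivative -/
lemma Kker_hasDerivAt_xx (α t : ℝ) (hα : 0 < α) (ht : 0 < t) (x : ℝ) (hx : 0 < x) :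
    HasDerivAt (fun y => (α ^ α / (2 ^ α * Real.Gamma (α / 2))) * t ^ (-(α / 2 + 1)) *
        Real.exp (-(α ^ 2) * y ^ (2 / α) / (4 * t)) * (1 - α / (2 * t) * y ^ (2 / α)))
      ((α ^ α / (2 ^ α * Real.Gamma (α / 2))) * t ^ (-(α / 2 + 1)) *
        Real.exp (-(α ^ 2) * x ^ (2 / α) / (4 * t)) * (α / (2 * t) * x ^ (2 / α - 1)) *
        (α / (2 * t) * x ^ (2 / α) - 1 - 2 / α)) x := by
  have hu : HasDerivAt (fun y : ℝ => -(α ^ 2) * y ^ (2 / α) / (4 * t))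
      (-(α ^ 2) * ((2 / α) * x ^ (2 / α - 1)) / (4 * t)) x :=
    ((Real.hasDerivAt_rpow_const (Or.inl hx.ne')).const_mul _).div_const _
  have hE := hu.exp
  have hP : HasDerivAt (fun y : ℝ => 1 - α / (2 * t) * y ^ (2 / α))
      (-(α / (2 * t) * ((2 / α) * x ^ (2 / α - 1)))) x :=
    ((Real.hasDerivAt_rpow_const (Or.inl hx.ne')).const_mul (α / (2 * t))).const_sub 1
  have h := (hE.mul hP).const_mul
      (α ^ α / (2 ^ α * Real.Gamma (α / 2)) * t ^ (-(α / 2 + 1)))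
  have hfun : (fun y => (α ^ α / (2 ^ α * Real.Gamma (α / 2))) * t ^ (-(α / 2 + 1)) *
        Real.exp (-(α ^ 2) * y ^ (2 / α) / (4 * t)) * (1 - α / (2 * t) * y ^ (2 / α))) =
      fun y => (α ^ α / (2 ^ α * Real.Gamma (α / 2)) * t ^ (-(α / 2 + 1))) *
        (Real.exp (-(α ^ 2) * y ^ (2 / α) / (4 * t)) * (1 - α / (2 * t) * y ^ (2 / α))) := by
    funext y; ring
  rw [hfun]
  refine h.congr_deriv ?_
  field_simp
  ring

/-- t-derivative -/
lemma Kker_hasDerivAt_t (α x : ℝ) (hα : 0 < α) (hx : 0 < x) (t : ℝ) (ht : 0 < t) :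
    HasDerivAt (fun s => Kker α x s)
      ((α ^ α / (2 ^ α * Real.Gamma (α / 2))) * x * t ^ (-(α / 2 + 1)) *
        Real.exp (-(α ^ 2) * x ^ (2 / α) / (4 * t)) *
        (α ^ 2 * x ^ (2 / α) / (4 * t ^ 2) - (α / 2 + 1) / t)) t := by
  have hfun : (fun s => Kker α x s) =
      fun s => (α ^ α / (2 ^ α * Real.Gamma (α / 2)) * x) *
        (s ^ (-(α / 2 + 1)) * Real.exp (-(α ^ 2) * x ^ (2 / α) / (4 * s))) := by
    funext s; unfold Kker; ring
  have hT : HasDerivAt (fun s : ℝ => s ^ (-(α / 2 + 1)))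
      ((-(α / 2 + 1)) * t ^ (-(α / 2 + 1) - 1)) t :=
    Real.hasDerivAt_rpow_const (Or.inl ht.ne')
  have hd : HasDerivAt (fun s : ℝ => 4 * s) 4 t := by
    simpa using (hasDerivAt_id t).const_mul (4 : ℝ)
  have hu := (hasDerivAt_const t (-(α ^ 2) * x ^ (2 / α))).div hd
    (by positivity : (4 : ℝ) * t ≠ 0)
  have hE := hu.exp
  have h := (hT.mul hE).const_mul (α ^ α / (2 ^ α * Real.Gamma (α / 2)) * x)
  rw [hfun]
  refine h.congr_deriv ?_
  have htt : t ^ (-(α / 2 + 1) - 1) = t ^ (-(α / 2 + 1)) / t := by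
    rw [Real.rpow_sub ht, Real.rpow_one]
  rw [htt]
  simp only [Pi.div_apply]
  field_simp
  ring

theorem stmt3 (α : ℝ) (hα : 0 < α) :
    ContDiffOn ℝ (⊤ : ℕ∞) (fun p : ℝ × ℝ => Kker α p.1 p.2) (Set.Ioi 0 ×ˢ Set.Ioi 0) ∧
    (∀ x t : ℝ, 0 < x → 0 < t →
      deriv (fun s => Kker α x s) t =
        x ^ (2 * (α - 1) / α) * iteratedDeriv 2 (fun y => Kker α y t) x) := by
  constructor
  · intro q hq
    have hx : (0:ℝ) < q.1 := hq.1
    have ht : (0:ℝ) < q.2 := hq.2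
    apply ContDiffAt.contDiffWithinAt
    have h1 : ContDiffAt ℝ (⊤ : ℕ∞) (fun p : ℝ × ℝ => p.2 ^ (-(α / 2 + 1))) q :=
      (Real.contDiffAt_rpow_const_of_ne (ne_of_gt ht)).comp q contDiff_snd.contDiffAt
    have h2 : ContDiffAt ℝ (⊤ : ℕ∞) (fun p : ℝ × ℝ => p.1 ^ (2 / α)) q :=
      (Real.contDiffAt_rpow_const_of_ne (ne_of_gt hx)).comp q contDiff_fst.contDiffAt
    have h3 : ContDiffAt ℝ (⊤ : ℕ∞)
        (fun p : ℝ × ℝ => -(α ^ 2) * p.1 ^ (2 / α) / (4 * p.2)) q :=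
      (contDiffAt_const.mul h2).div (contDiffAt_const.mul contDiff_snd.contDiffAt)
        (by positivity : (4 : ℝ) * q.2 ≠ 0)
    have h4 := Real.contDiff_exp.contDiffAt.comp q h3
    have := (((contDiffAt_const (c := α ^ α / (2 ^ α * Real.Gamma (α / 2)))).mul
        contDiff_fst.contDiffAt).mul h1).mul h4
    simpa only [Kker, Function.comp] using this
  · intro x t hx ht
    rw [(Kker_hasDerivAt_t α x hα hx t ht).deriv]
    have h2 : iteratedDeriv 2 (fun y => Kker α y t) x
        = deriv (deriv (fun y => Kker α y t)) x := by
      rw [show (2:ℕ) = 1 + 1 by rfl, iteratedDeriv_succ, iteratedDeriv_one]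
    have hev : deriv (fun y => Kker α y t) =ᶠ[nhds x]
        (fun y => (α ^ α / (2 ^ α * Real.Gamma (α / 2))) * t ^ (-(α / 2 + 1)) *
          Real.exp (-(α ^ 2) * y ^ (2 / α) / (4 * t)) * (1 - α / (2 * t) * y ^ (2 / α))) := by
      filter_upwards [Ioi_mem_nhds hx] with y hy
      exact (Kker_hasDerivAt_x α t hα ht y hy).deriv
    rw [h2, hev.deriv_eq, (Kker_hasDerivAt_xx α t hα ht x hx).deriv]
    have hq : x ^ (2 * (α - 1) / α) * x ^ (2 / α - 1) = x := by
      rw [← Real.rpow_add hx, show 2 * (α - 1) / α + (2 / α - 1) = 1 by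
        field_simp; ring, Real.rpow_one]
    rw [show x ^ (2 * (α - 1) / α) *
        ((α ^ α / (2 ^ α * Real.Gamma (α / 2))) * t ^ (-(α / 2 + 1)) *
          Real.exp (-(α ^ 2) * x ^ (2 / α) / (4 * t)) * (α / (2 * t) * x ^ (2 / α - 1)) *
          (α / (2 * t) * x ^ (2 / α) - 1 - 2 / α)) =
        (α ^ α / (2 ^ α * Real.Gamma (α / 2))) * t ^ (-(α / 2 + 1)) *
          Real.exp (-(α ^ 2) * x ^ (2 / α) / (4 * t)) *
          (α / (2 * t) * (x ^ (2 * (α - 1) / α) * x ^ (2 / α - 1))) *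
          (α / (2 * t) * x ^ (2 / α) - 1 - 2 / α) by ring, hq]
    field_simp
    ring
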